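/- Let t ≥ 1, b ≥ 2, c ≥ 0 be integers and let a_1, ..., a_t be integers with a_i ≥ 1 for all i ∈ [t]. Suppose λ_min = min{λ ∈ {1,...,b} : (Σ_{i=1}^t a_i)·λ + c − λ ≡ 0 (mod b)} exists, and set N = Σ_{i=1}^t (λ_min + (i−1)b)·a_i + c. Then for every integer n ≥ N, every exact b-coloring χ of [n] contains either a rainbow solution of y = x + b (an x with x + b ≤ n and χ(x) ≠ χ(x+b)) or a monochromatic solution of y = Σ_{i=1}^t a_i x_i + c (elements x_1, ..., x_t ∈ [n] with y = Σ_{i=1}^t a_i x_i + c ≤ n and χ(x_1) = χ(x_2) = ... = χ(x_t) = χ(y)). -/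

import Mathlib

open Finset in
/-- upper bound for `GR_b(y = x + b : y = Σ aᵢxᵢ + c)`.
Let `t ≥ 1`, `b ≥ 2`, `c ≥ 0` and `aᵢ ≥ 1` for `i ∈ [t]`. Suppose `λ_min` is the least
`λ ∈ {1,…,b}` with `(Σᵢ aᵢ)·λ + c ≡ λ (mod b)`, and let
`N = Σᵢ (λ_min + (i−1)·b)·aᵢ + c`. Then for every `n ≥ N`, every exact `b`-coloring of
`[n]` contains either a rainbow solution of `y = x + b` or a monochromatic solution of
`y = Σᵢ aᵢxᵢ + c`. -/
theorem stmt_7 (t b c : ℕ) (a : ℕ → ℕ) (ht : 1 ≤ t) (hb : 2 ≤ b)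
    (ha : ∀ i, 1 ≤ i → i ≤ t → 1 ≤ a i) (lmin : ℕ)
    (hlm : IsLeast {l : ℕ | 1 ≤ l ∧ l ≤ b ∧
      (∑ i ∈ Icc 1 t, a i) * l + c ≡ l [MOD b]} lmin) :
    ∀ n, (∑ i ∈ Icc 1 t, (lmin + (i - 1) * b) * a i) + c ≤ n →
      ∀ χ : ℕ → Fin b, (∀ col, ∃ x, 1 ≤ x ∧ x ≤ n ∧ χ x = col) →
        (∃ x, 1 ≤ x ∧ x + b ≤ n ∧ χ x ≠ χ (x + b)) ∨
        (∃ x : ℕ → ℕ, (∀ i, 1 ≤ i → i ≤ t → 1 ≤ x i ∧ x i ≤ n) ∧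
          (∑ i ∈ Icc 1 t, a i * x i) + c ≤ n ∧
          ∀ i, 1 ≤ i → i ≤ t → χ (x i) = χ ((∑ i ∈ Icc 1 t, a i * x i) + c)) := by
  intro n hn χ _hsurj
  by_cases hr : ∃ x, 1 ≤ x ∧ x + b ≤ n ∧ χ x ≠ χ (x + b)
  · exact Or.inl hr
  push_neg at hr
  right
  obtain ⟨⟨hl1, hlb, hmod⟩, -⟩ := hlm
  set X : ℕ → ℕ := fun i => lmin + (i - 1) * b with hX
  have heq : (∑ i ∈ Icc 1 t, a i * X i) = ∑ i ∈ Icc 1 t, (lmin + (i - 1) * b) * a i :=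
    Finset.sum_congr rfl (fun i _ => mul_comm _ _)
  set y : ℕ := (∑ i ∈ Icc 1 t, a i * X i) + c with hy
  have hyn : y ≤ n := by rw [hy, heq]; exact hn
  -- climbing lemma
  have key : ∀ k x, 1 ≤ x → x + k * b ≤ n → χ x = χ (x + k * b) := by
    intro k
    induction k with
    | zero => simp
    | succ k ih =>
      intro x hx hxn
      have hkb : (k + 1) * b = k * b + b := by ring
      have h1 : χ x = χ (x + b) := hr x hx (by omega)
      have h2 := ih (x + b) (by omega) (by omega)
      have h3 : x + b + k * b = x + (k + 1) * b := by ring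
      rw [h3] at h2
      rw [h1, h2]
  -- each X i ≡ lmin mod b
  have hXmod : ∀ i, lmin ≡ X i [MOD b] :=
    fun i => (Nat.modEq_iff_dvd' (by simp [hX])).mpr (by simp [hX])
  -- y ≡ lmin mod b
  have hymod : lmin ≡ y [MOD b] := by
    have hsum : ∀ s : Finset ℕ, (∑ i ∈ s, a i * lmin) ≡ (∑ i ∈ s, a i * X i) [MOD b] := by
      intro s
      induction s using Finset.induction with
      | empty => rfl
      | insert _ _ h ih =>
        rw [Finset.sum_insert h, Finset.sum_insert h]
        exact ((hXmod _).mul_left _).add ih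
    have h4 : (∑ i ∈ Icc 1 t, a i) * lmin + c ≡ y [MOD b] := by
      rw [hy, Finset.sum_mul]
      exact (hsum _).add_right c
    exact hmod.symm.trans h4
  -- bounds on X i and y
  have hterm : ∀ i, 1 ≤ i → i ≤ t → X i ≤ y := by
    intro i h1 h2
    have hmem : i ∈ Icc 1 t := Finset.mem_Icc.mpr ⟨h1, h2⟩
    have h5 : a i * X i ≤ ∑ j ∈ Icc 1 t, a j * X j :=
      Finset.single_le_sum (f := fun j => a j * X j) (fun j _ => Nat.zero_le _) hmem
    have h6 : X i ≤ a i * X i := Nat.le_mul_of_pos_left _ (ha i h1 h2)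
    omega
  refine ⟨X, fun i h1 h2 => ⟨by simp [hX]; omega, le_trans (hterm i h1 h2) hyn⟩, hyn, ?_⟩
  intro i h1 h2
  have hle : X i ≤ y := hterm i h1 h2
  have hd : b ∣ y - X i := (Nat.modEq_iff_dvd' hle).mp ((hXmod i).symm.trans hymod)
  obtain ⟨k, hk⟩ := hd
  have hyeq : y = X i + k * b := by
    calc y = y - X i + X i := (Nat.sub_add_cancel hle).symm
    _ = b * k + X i := by rw [hk]
    _ = X i + k * b := by ring
  have := key k (X i) (by simp [hX]; omega) (by rw [← hyeq]; exact hyn)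
  rw [← hyeq] at this
  exact this
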